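/- Let α > −1 with α ≠ 0, let a₁, a₂ ∈ ℝ and ε > 0, and define c₁ : ℝ² ∖ {0} → ℝ by c₁(y) = ε·g_α(|y|)·(a₁ y₁ + a₂ y₂)/|y|, where g_α(r) = −r/(4α(1+α)(1+r^{2+2α})). Then Δc₁(y) + 8(1+α)² |y|^{2α} (1+|y|^{2+2α})^{−2} c₁(y) = −ε (a₁ y₁ + a₂ y₂) |y|^{2α} (1+|y|^{2+2α})^{−2} for every y ∈ ℝ² ∖ {0}. -/

import Mathlib

/-- The Euclidean norm on `ℝ²` (realized as `ℝ × ℝ`). -/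
noncomputable def nrm (x : ℝ × ℝ) : ℝ := Real.sqrt (x.1 ^ 2 + x.2 ^ 2)

/-- The Laplacian `Δ = ∂²/∂x₁² + ∂²/∂x₂²` on `ℝ²`. -/
noncomputable def lap (u : ℝ × ℝ → ℝ) (x : ℝ × ℝ) : ℝ :=
  deriv (deriv fun s : ℝ => u (x.1 + s, x.2)) 0 +
  deriv (deriv fun s : ℝ => u (x.1, x.2 + s)) 0

open Filter

private lemma keylem (α K b₁ b₂ x₁ x₂ : ℝ) (h : 0 < x₁^2 + x₂^2) :
    deriv (deriv (fun t => K * (b₁*(x₁+t)+b₂*x₂) *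
      (1 + ((x₁+t)^2+x₂^2) ^ (1+α))⁻¹)) 0
    = K * (4*b₁*x₁*(-((1+α)*(x₁^2+x₂^2)^α)/(1+(x₁^2+x₂^2)^(1+α))^2)
        + (b₁*x₁+b₂*x₂) *
          (2*(-((1+α)*(x₁^2+x₂^2)^α)/(1+(x₁^2+x₂^2)^(1+α))^2)
           + 4*x₁^2*(-((1+α)*α*(x₁^2+x₂^2)^(α-1))/(1+(x₁^2+x₂^2)^(1+α))^2
             + 2*(1+α)^2*((x₁^2+x₂^2)^α)^2/(1+(x₁^2+x₂^2)^(1+α))^3))) := by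
  have hs : ∀ t : ℝ, HasDerivAt (fun u : ℝ => (x₁+u)^2+x₂^2) (2*(x₁+t)) t := by
    intro t
    have := (((hasDerivAt_id t).const_add x₁).pow 2).add_const (x₂^2)
    simp only [id_eq] at this
    refine this.congr_deriv ?_
    push_cast; ring
  set D : ℝ → ℝ := fun t =>
    K*b₁ * (1+((x₁+t)^2+x₂^2)^(1+α))⁻¹ +
    K*(b₁*(x₁+t)+b₂*x₂) *
      (-((1+α) * ((x₁+t)^2+x₂^2)^α * (2*(x₁+t))) / (1+((x₁+t)^2+x₂^2)^(1+α))^2) with hD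
  have hqpos : ∀ t : ℝ, 0 < (x₁+t)^2+x₂^2 → (0:ℝ) < 1+((x₁+t)^2+x₂^2)^(1+α) := by
    intro t ht
    have := Real.rpow_pos_of_pos ht (1+α)
    linarith
  have hderiv1 : ∀ t : ℝ, 0 < (x₁+t)^2+x₂^2 →
      HasDerivAt (fun u => K * (b₁*(x₁+u)+b₂*x₂) *
        (1 + ((x₁+u)^2+x₂^2) ^ (1+α))⁻¹) (D t) t := by
    intro t ht
    have hq : HasDerivAt (fun u : ℝ => 1+((x₁+u)^2+x₂^2)^(1+α))
        ((2*(x₁+t)) * (1+α) * ((x₁+t)^2+x₂^2)^(1+α-1)) t :=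
      ((hs t).rpow_const (Or.inl ht.ne')).const_add 1
    rw [show (1+α-1 : ℝ) = α by ring] at hq
    have hinv := hq.inv (hqpos t ht).ne'
    have hL : HasDerivAt (fun u : ℝ => K*(b₁*(x₁+u)+b₂*x₂)) (K*b₁) t := by
      simpa using ((((hasDerivAt_id t).const_add x₁).const_mul b₁).add_const (b₂*x₂)).const_mul K
    have := hL.mul hinv
    refine this.congr_deriv ?_
    rw [hD]
    simp only [Pi.inv_apply]
    ring
  have hev : ∀ᶠ t in nhds (0:ℝ), 0 < (x₁+t)^2+x₂^2 := by
    have hc : Continuous fun t : ℝ => (x₁+t)^2+x₂^2 := by fun_prop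
    have h0 : (0:ℝ) < (x₁+(0:ℝ))^2+x₂^2 := by simpa using h
    exact hc.continuousAt.eventually (eventually_gt_nhds h0)
  have heq : deriv (fun t => K * (b₁*(x₁+t)+b₂*x₂) *
      (1 + ((x₁+t)^2+x₂^2) ^ (1+α))⁻¹) =ᶠ[nhds (0:ℝ)] D :=
    hev.mono fun t ht => (hderiv1 t ht).deriv
  rw [heq.deriv_eq]
  have h0 : (0:ℝ) < (x₁+(0:ℝ))^2+x₂^2 := by simpa using h
  have hq0 : HasDerivAt (fun u : ℝ => 1+((x₁+u)^2+x₂^2)^(1+α))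
      ((2*(x₁+0)) * (1+α) * ((x₁+0)^2+x₂^2)^(1+α-1)) 0 :=
    ((hs 0).rpow_const (Or.inl h0.ne')).const_add 1
  rw [show (1+α-1 : ℝ) = α by ring] at hq0
  have hqne : (1+((x₁+(0:ℝ))^2+x₂^2)^(1+α)) ≠ 0 := (hqpos 0 h0).ne'
  have hinv0 := hq0.inv hqne
  have term1 := hinv0.const_mul (K*b₁)
  have hL0 : HasDerivAt (fun u : ℝ => K*(b₁*(x₁+u)+b₂*x₂)) (K*b₁) 0 := by
    simpa using ((((hasDerivAt_id (0:ℝ)).const_add x₁).const_mul b₁).add_const (b₂*x₂)).const_mul K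
  have hsa : HasDerivAt (fun u : ℝ => ((x₁+u)^2+x₂^2)^α)
      ((2*(x₁+0)) * α * ((x₁+0)^2+x₂^2)^(α-1)) 0 :=
    (hs 0).rpow_const (Or.inl h0.ne')
  have h2x : HasDerivAt (fun u : ℝ => 2*(x₁+u)) (2*1) 0 :=
    ((hasDerivAt_id (0:ℝ)).const_add x₁).const_mul 2
  have hN := ((hsa.const_mul (1+α)).mul h2x).neg
  have hq2 := hq0.pow 2
  have hq2ne : ((1+((x₁+(0:ℝ))^2+x₂^2)^(1+α))^2) ≠ 0 := pow_ne_zero 2 hqne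
  have hdiv := hN.div hq2 hq2ne
  have term2 := hL0.mul hdiv
  have hE := term1.add term2
  rw [show deriv D 0 = _ from hE.deriv]
  simp only [Pi.add_apply, Pi.mul_apply, Pi.neg_apply, Pi.div_apply, Pi.pow_apply, Pi.inv_apply]
  have hq0pos := hqpos 0 h0
  rw [show (x₁+(0:ℝ)) = x₁ by ring] at *
  set A := (x₁^2+x₂^2)^α with hA
  set B := (x₁^2+x₂^2)^(α-1) with hB
  set q := 1+(x₁^2+x₂^2)^(1+α) with hq
  have hqne' : q ≠ 0 := hqne
  push_cast
  field_simp
  ring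

private lemma alg (α ε a₁ a₂ u v s A : ℝ) (hα0 : α ≠ 0) (h1α : 1+α ≠ 0)
    (hs : u^2+v^2 = s) (hs0 : s ≠ 0) (hq : 1+s*A ≠ 0) :
    (-ε/(4*α*(1+α))) * (4*a₁*u*(-((1+α)*A)/(1+s*A)^2)
        + (a₁*u+a₂*v) * (2*(-((1+α)*A)/(1+s*A)^2)
           + 4*u^2*(-((1+α)*α*(A/s))/(1+s*A)^2
              + 2*(1+α)^2*A^2/(1+s*A)^3)))
    + (-ε/(4*α*(1+α))) * (4*a₂*v*(-((1+α)*A)/(1+s*A)^2)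
        + (a₂*v+a₁*u) * (2*(-((1+α)*A)/(1+s*A)^2)
           + 4*v^2*(-((1+α)*α*(A/s))/(1+s*A)^2
              + 2*(1+α)^2*A^2/(1+s*A)^3)))
    + 8*(1+α)^2*A/(1+s*A)^2 * ((-ε/(4*α*(1+α)))*(a₁*u+a₂*v)*(1+s*A)⁻¹)
    = -ε*(a₁*u+a₂*v)*A/(1+s*A)^2 := by
  set P1 : ℝ := -((1+α)*A)/(1+s*A)^2 with hP1
  set P2 : ℝ := -((1+α)*α*(A/s))/(1+s*A)^2 + 2*(1+α)^2*A^2/(1+s*A)^3 with hP2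
  have hcomb : (-ε/(4*α*(1+α))) * (4*a₁*u*P1 + (a₁*u+a₂*v)*(2*P1+4*u^2*P2))
      + (-ε/(4*α*(1+α))) * (4*a₂*v*P1 + (a₂*v+a₁*u)*(2*P1+4*v^2*P2))
      = (-ε/(4*α*(1+α))) * (a₁*u+a₂*v) * (8*P1+4*s*P2) := by
    linear_combination (4*(-ε/(4*α*(1+α)))*(a₁*u+a₂*v)*P2) * hs
  rw [hcomb, hP1, hP2]
  field_simp
  have hq' : 1 + A*s ≠ 0 := by rwa [mul_comm]
  field_simp
  ring

set_option maxHeartbeats 1000000 in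
/-- the first correction term
`c₁(y) = ε g_α(|y|)(a₁y₁ + a₂y₂)/|y|`, with
`g_α(r) = -r/(4α(1+α)(1+r^{2+2α}))`, solves the linearized equation at the
standard bubble with forcing `-ε(a₁y₁+a₂y₂)|y|^{2α}(1+|y|^{2+2α})^{-2}`. -/
theorem stmt4 (α : ℝ) (hα : α > -1) (hα0 : α ≠ 0) (a₁ a₂ ε : ℝ) (hε : 0 < ε)
    (g : ℝ → ℝ)
    (hg : ∀ r : ℝ, 0 < r →
      g r = -r / (4 * α * (1 + α) * (1 + r ^ (2 + 2 * α))))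
    (c₁ : ℝ × ℝ → ℝ)
    (hc₁ : ∀ y : ℝ × ℝ, y ≠ 0 →
      c₁ y = ε * g (nrm y) * (a₁ * y.1 + a₂ * y.2) / nrm y) :
    ∀ y : ℝ × ℝ, y ≠ 0 →
      lap c₁ y
        + 8 * (1 + α) ^ 2 * nrm y ^ (2 * α) / (1 + nrm y ^ (2 + 2 * α)) ^ 2 * c₁ y
      = -ε * (a₁ * y.1 + a₂ * y.2) * nrm y ^ (2 * α)
          / (1 + nrm y ^ (2 + 2 * α)) ^ 2 := by
  intro y hy
  set K : ℝ := -ε / (4 * α * (1 + α)) with hK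
  have h1α : (1:ℝ) + α ≠ 0 := by intro h; linarith [hα]
  have hpos : ∀ z : ℝ × ℝ, z ≠ 0 → 0 < z.1 ^ 2 + z.2 ^ 2 := by
    intro z hz
    rcases eq_or_ne z.1 0 with h1 | h1
    · have h2 : z.2 ≠ 0 := fun h2 => hz (Prod.ext h1 h2)
      positivity
    · positivity
  have hy2 := hpos y hy
  have hF : ∀ z : ℝ × ℝ, 0 < z.1 ^ 2 + z.2 ^ 2 →
      c₁ z = K * (a₁ * z.1 + a₂ * z.2) * (1 + (z.1 ^ 2 + z.2 ^ 2) ^ (1+α))⁻¹ := by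
    intro z hz
    have hzne : z ≠ 0 := by
      intro h; rw [h] at hz; norm_num at hz
    have hn : 0 < nrm z := Real.sqrt_pos.mpr hz
    have hpow : nrm z ^ (2 + 2*α) = (z.1 ^ 2 + z.2 ^ 2) ^ (1+α) := by
      rw [nrm, Real.sqrt_eq_rpow, ← Real.rpow_mul hz.le]
      congr 1; ring
    have hT : (0:ℝ) < 1 + (z.1 ^ 2 + z.2 ^ 2) ^ (1+α) := by
      have := Real.rpow_pos_of_pos hz (1+α); linarith
    rw [hc₁ z hzne, hg (nrm z) hn, hpow, hK]
    field_simp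
  -- first direction
  have hev1 : ∀ᶠ t in nhds (0:ℝ), 0 < (y.1+t)^2+y.2^2 := by
    have hc : Continuous fun t : ℝ => (y.1+t)^2+y.2^2 := by fun_prop
    have h0 : (0:ℝ) < (y.1+(0:ℝ))^2+y.2^2 := by simpa using hy2
    exact hc.continuousAt.eventually (eventually_gt_nhds h0)
  have heq1 : (fun t => c₁ (y.1+t, y.2)) =ᶠ[nhds (0:ℝ)]
      (fun t => K * (a₁*(y.1+t)+a₂*y.2) * (1+((y.1+t)^2+y.2^2)^(1+α))⁻¹) :=
    hev1.mono fun t ht => by simpa using hF (y.1+t, y.2) (by simpa using ht)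
  have hd1 : deriv (deriv fun t : ℝ => c₁ (y.1+t, y.2)) 0
      = deriv (deriv fun t : ℝ =>
          K * (a₁*(y.1+t)+a₂*y.2) * (1+((y.1+t)^2+y.2^2)^(1+α))⁻¹) 0 :=
    (heq1.deriv).deriv_eq
  -- second direction
  have hev2 : ∀ᶠ t in nhds (0:ℝ), 0 < (y.2+t)^2+y.1^2 := by
    have hc : Continuous fun t : ℝ => (y.2+t)^2+y.1^2 := by fun_prop
    have h0 : (0:ℝ) < (y.2+(0:ℝ))^2+y.1^2 := by simp; linarith
    exact hc.continuousAt.eventually (eventually_gt_nhds h0)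
  have heq2 : (fun t => c₁ (y.1, y.2+t)) =ᶠ[nhds (0:ℝ)]
      (fun t => K * (a₂*(y.2+t)+a₁*y.1) * (1+((y.2+t)^2+y.1^2)^(1+α))⁻¹) :=
    hev2.mono fun t ht => by
      have h' : 0 < (y.1, y.2+t).1 ^ 2 + (y.1, y.2+t).2 ^ 2 := by simp; linarith
      have h2 : c₁ (y.1, y.2+t)
          = K * (a₁ * y.1 + a₂ * (y.2+t)) * (1 + (y.1^2 + (y.2+t)^2) ^ (1+α))⁻¹ :=
        hF (y.1, y.2+t) h'
      exact h2.trans (by rw [add_comm (y.1^2) ((y.2+t)^2)]; ring)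
  have hd2 : deriv (deriv fun t : ℝ => c₁ (y.1, y.2+t)) 0
      = deriv (deriv fun t : ℝ =>
          K * (a₂*(y.2+t)+a₁*y.1) * (1+((y.2+t)^2+y.1^2)^(1+α))⁻¹) 0 :=
    (heq2.deriv).deriv_eq
  have h2a : nrm y ^ (2*α) = (y.1 ^ 2 + y.2 ^ 2) ^ α := by
    rw [nrm, Real.sqrt_eq_rpow, ← Real.rpow_mul hy2.le]
    congr 1; ring
  have h2p : nrm y ^ (2 + 2*α) = (y.1 ^ 2 + y.2 ^ 2) ^ (1+α) := by
    rw [nrm, Real.sqrt_eq_rpow, ← Real.rpow_mul hy2.le]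
    congr 1; ring
  rw [lap, hd1, hd2, keylem α K a₁ a₂ y.1 y.2 hy2,
      keylem α K a₂ a₁ y.2 y.1 (by linarith), hF y hy2, h2a, h2p,
      show y.2^2+y.1^2 = y.1^2+y.2^2 by ring]
  -- final algebra
  have hTdef : (y.1^2+y.2^2) ^ (1+α) = (y.1^2+y.2^2) * (y.1^2+y.2^2)^α := by
    rw [Real.rpow_add hy2, Real.rpow_one]
  have hBdef : (y.1^2+y.2^2) ^ (α-1) = (y.1^2+y.2^2)^α / (y.1^2+y.2^2) := by
    rw [Real.rpow_sub hy2, Real.rpow_one]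
  have hApos := Real.rpow_pos_of_pos hy2 α
  have hqne : 1+(y.1^2+y.2^2)*(y.1^2+y.2^2)^α ≠ 0 := by positivity
  rw [hTdef, hBdef, hK]
  exact alg α ε a₁ a₂ y.1 y.2 (y.1^2+y.2^2) ((y.1^2+y.2^2)^α) hα0 h1α rfl hy2.ne' hqne
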